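/- Dual Pieri identity: under the same hypotheses, e_r(e^{-iξ_1},...,e^{-iξ_n}) φ_ξ(λ) = Σ_J V_{λ,J^c} φ_ξ(λ - e_J), the sum over subsets J ⊆ {1,...,n} with |J| = r such that λ - e_J is weakly decreasing. Moreover, for 1 ≤ r < n this identity follows from the Pieri identity for e_{n-r}(e^{iξ}) upon dividing by e_n(e^{iξ}) = e^{i(ξ_1+...+ξ_n)} and using φ_ξ(λ + e_1+...+e_n) = e^{i(ξ_1+...+ξ_n)}φ_ξ(λ). -/

import Mathlib

open Complex
open scoped Classical


noncomputable def Cfun (q : ℝ) {n : ℕ} (xi : Fin n → ℝ) : ℂ :=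
  ∏ j : Fin n, ∏ k : Fin n,
    if j < k then
      (1 - (q : ℂ) * exp (I * ((xi k : ℂ) - (xi j : ℂ))))
        / (1 - exp (I * ((xi k : ℂ) - (xi j : ℂ)))) else 1

/-- The `n`-variable Hall–Littlewood function `φ_ξ(λ) = Σ_{σ ∈ S_n} C(ξ_σ) e^{i λ·ξ_σ}`. -/
noncomputable def hallLittlewood (q : ℝ) {n : ℕ} (xi : Fin n → ℝ) (lam : Fin n → ℤ) : ℂ :=
  ∑ σ : Equiv.Perm (Fin n),
    Cfun q (xi ∘ σ) * exp (I * ∑ j : Fin n, (lam j : ℂ) * (xi (σ j) : ℂ))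

/-- `V_{λ,J}`. -/
noncomputable def Vcoef {n : ℕ} (q : ℝ) (lam : Fin n → ℤ) (J : Finset (Fin n)) : ℝ :=
  ∏ j : Fin n, ∏ k : Fin n,
    if j < k ∧ j ∈ J ∧ k ∉ J ∧ lam j = lam k then
      (1 - q ^ ((k : ℕ) - (j : ℕ) + 1)) / (1 - q ^ ((k : ℕ) - (j : ℕ))) else 1

namespace DP

variable {n : ℕ}

/-- upward closed within classes of `lam` -/
def upClosed (lam : Fin n → ℤ) (X : Finset (Fin n)) : Prop :=
  ∀ i ∈ X, ∀ k, i ≤ k → lam k = lam i → k ∈ X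

noncomputable def cnt (lam : Fin n → ℤ) (K : Finset (Fin n)) (i : Fin n) : ℕ :=
  (K.filter (fun k => lam k = lam i)).card

noncomputable def hfun (lam : Fin n → ℤ) (i : Fin n) : ℕ :=
  (Finset.univ.filter (fun k => lam k = lam i ∧ i ≤ k)).card

noncomputable def NN (lam : Fin n → ℤ) (K : Finset (Fin n)) : Finset (Fin n) :=
  Finset.univ.filter (fun i => hfun lam i ≤ cnt lam K i)

noncomputable def dd (lam : Fin n → ℤ) (K : Finset (Fin n)) : ℕ :=
  ((Finset.univ ×ˢ Finset.univ : Finset (Fin n × Fin n)).filter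
    (fun p => p.1 ∈ K ∧ p.2 ∉ K ∧ p.1 < p.2 ∧ lam p.1 = lam p.2)).card

noncomputable def VU (q : ℝ) (lam : Fin n → ℤ) (U J : Finset (Fin n)) : ℝ :=
  ∏ j : Fin n, ∏ k : Fin n,
    if j < k ∧ j ∈ U ∧ j ∉ J ∧ k ∈ J ∧ lam j = lam k then
      (1 - q ^ ((k:ℕ) - (j:ℕ) + 1)) / (1 - q ^ ((k:ℕ) - (j:ℕ))) else 1

def mu (lam : Fin n → ℤ) (K : Finset (Fin n)) : Fin n → ℤ :=
  fun k => lam k - if k ∈ K then 1 else 0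

section cntlemmas

variable (lam : Fin n → ℤ)

lemma cnt_congr (K : Finset (Fin n)) {i i' : Fin n} (h : lam i = lam i') :
    cnt lam K i = cnt lam K i' := by
  unfold cnt; congr 1; apply Finset.filter_congr; intro k _; simp [h]

lemma cnt_insert {K : Finset (Fin n)} {a : Fin n} (ha : a ∉ K) (i : Fin n) :
    cnt lam (insert a K) i = cnt lam K i + (if lam a = lam i then 1 else 0) := by
  unfold cnt
  rw [Finset.filter_insert]
  split_ifs with h
  · rw [Finset.card_insert_of_notMem (by simp [ha])]
  · rfl

lemma cnt_erase {J : Finset (Fin n)} {b : Fin n} (hb : b ∈ J) (i : Fin n) :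
    cnt lam (J.erase b) i + (if lam b = lam i then 1 else 0) = cnt lam J i := by
  unfold cnt
  rw [Finset.filter_erase]
  split_ifs with h
  · rw [Finset.card_erase_of_mem (by simp [hb, h])]
    have : 0 < (J.filter (fun k => lam k = lam i)).card :=
      Finset.card_pos.2 ⟨b, by simp [hb, h]⟩
    omega
  · rw [Finset.erase_eq_of_notMem (by simp [h])]
    simp

lemma card_eq_of_cntMatch {K J : Finset (Fin n)} (h : ∀ i, cnt lam K i = cnt lam J i) :
    K.card = J.card := by
  rw [Finset.card_eq_sum_card_fiberwise (f := lam) (t := Finset.univ.image lam)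
    (fun x _ => Finset.mem_image_of_mem lam (Finset.mem_univ x)),
    Finset.card_eq_sum_card_fiberwise (f := lam) (t := Finset.univ.image lam)
    (fun x _ => Finset.mem_image_of_mem lam (Finset.mem_univ x))]
  refine Finset.sum_congr rfl ?_
  intro v hv
  obtain ⟨i, _, rfl⟩ := Finset.mem_image.1 hv
  exact h i

end cntlemmas

section NNlemmas

variable (lam : Fin n → ℤ)

lemma hfun_pos (i : Fin n) : 1 ≤ hfun lam i :=
  Finset.card_pos.2 ⟨i, by simp [hfun]⟩

lemma hfun_le_of_le {i k : Fin n} (hik : i ≤ k) (h : lam i = lam k) :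
    hfun lam k ≤ hfun lam i := by
  apply Finset.card_le_card
  intro x hx
  simp only [hfun, Finset.mem_filter, Finset.mem_univ, true_and] at hx ⊢
  exact ⟨hx.1.trans h.symm, le_trans hik hx.2⟩

lemma hfun_lt_of_lt {i k : Fin n} (hik : i < k) (h : lam i = lam k) :
    hfun lam k < hfun lam i := by
  apply Finset.card_lt_card
  constructor
  · intro x hx
    simp only [hfun, Finset.mem_filter, Finset.mem_univ, true_and] at hx ⊢
    exact ⟨hx.1.trans h.symm, le_trans hik.le hx.2⟩
  · intro hsub
    have := hsub (by simp [hfun] : i ∈ Finset.univ.filter (fun x => lam x = lam i ∧ i ≤ x))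
    simp only [hfun, Finset.mem_filter, Finset.mem_univ, true_and] at this
    exact absurd this.2 (not_le.2 hik)

/-- key counting lemma: per-class count of the normalization -/
lemma cnt_NN (K : Finset (Fin n)) (i : Fin n) :
    cnt lam (NN lam K) i = cnt lam K i := by
  classical
  set C : Finset (Fin n) := Finset.univ.filter (fun k => lam k = lam i) with hC
  set m : ℕ := C.card with hm
  set c : ℕ := cnt lam K i with hc
  have hcm : c ≤ m := Finset.card_le_card (Finset.filter_subset_filter _ (Finset.subset_univ K))
  -- hfun restricted to C
  have hrange : ∀ i' ∈ C, hfun lam i' ∈ Finset.Icc 1 m := by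
    intro i' hi'
    simp only [hC, Finset.mem_filter] at hi'
    refine Finset.mem_Icc.2 ⟨hfun_pos lam i', ?_⟩
    apply Finset.card_le_card
    intro x hx
    simp only [hfun, Finset.mem_filter, Finset.mem_univ, true_and] at hx
    simp [hC, hx.1, hi'.2]
  have hinj : Set.InjOn (hfun lam) C := by
    intro x hx y hy hxy
    simp only [hC, Finset.coe_filter, Set.mem_setOf_eq] at hx hy
    by_contra hne
    rcases lt_or_gt_of_ne hne with hlt | hlt
    · exact absurd hxy (Nat.ne_of_gt (hfun_lt_of_lt lam hlt (hx.2.trans hy.2.symm)))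
    · exact absurd hxy (Nat.ne_of_lt (hfun_lt_of_lt lam hlt (hy.2.trans hx.2.symm)))
  have himage : C.image (hfun lam) = Finset.Icc 1 m := by
    apply Finset.eq_of_subset_of_card_le
    · intro t ht
      obtain ⟨i', hi', rfl⟩ := Finset.mem_image.1 ht
      exact hrange i' hi'
    · rw [Finset.card_image_of_injOn hinj, Nat.card_Icc]
      omega
  -- now compute
  have hNNfilter : (NN lam K).filter (fun k => lam k = lam i)
      = C.filter (fun i' => hfun lam i' ≤ c) := by
    ext x
    simp only [NN, hC, Finset.mem_filter, Finset.mem_univ, true_and]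
    constructor
    · rintro ⟨h1, h2⟩
      exact ⟨h2, h1.trans_eq (cnt_congr lam K h2)⟩
    · rintro ⟨h1, h2⟩
      exact ⟨h2.trans_eq (cnt_congr lam K h1).symm, h1⟩
  have himage2 : (C.filter (fun i' => hfun lam i' ≤ c)).image (hfun lam) = Finset.Icc 1 c := by
    ext t
    constructor
    · intro ht
      obtain ⟨i', hi', rfl⟩ := Finset.mem_image.1 ht
      have h1 := hrange i' (Finset.mem_of_mem_filter _ hi')
      have h2 := (Finset.mem_filter.1 hi').2
      simp only [Finset.mem_Icc] at h1 ⊢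
      exact ⟨h1.1, h2⟩
    · intro ht
      have ht' := Finset.mem_Icc.1 ht
      have : t ∈ C.image (hfun lam) := by
        rw [himage]; exact Finset.mem_Icc.2 ⟨ht'.1, le_trans ht'.2 hcm⟩
      obtain ⟨i', hi', rfl⟩ := Finset.mem_image.1 this
      exact Finset.mem_image.2 ⟨i', Finset.mem_filter.2 ⟨hi', ht'.2⟩, rfl⟩
  have : cnt lam (NN lam K) i = (C.filter (fun i' => hfun lam i' ≤ c)).card := by
    rw [cnt, hNNfilter]
  rw [this, ← Finset.card_image_of_injOn
      (hinj.mono (by intro x hx; exact Finset.mem_coe.2 (Finset.mem_of_mem_filter _ (Finset.mem_coe.1 hx)))),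
    himage2, Nat.card_Icc]
  omega

lemma NN_cnt_congr {K K' : Finset (Fin n)} (h : ∀ i, cnt lam K i = cnt lam K' i) :
    NN lam K = NN lam K' := by
  unfold NN
  apply Finset.filter_congr
  intro i _
  simp [h i]

lemma upClosed_of_antitone_mu {J : Finset (Fin n)} (h : Antitone (mu lam J)) :
    upClosed lam J := by
  intro i hi k hik hki
  have := h hik
  simp only [mu, hi, if_pos] at this
  by_contra hk
  rw [if_neg hk, hki] at this
  omega

lemma NN_eq_of_upClosed {J : Finset (Fin n)} (h : upClosed lam J) :
    NN lam J = J := by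
  ext i
  simp only [NN, Finset.mem_filter, Finset.mem_univ, true_and]
  constructor
  · intro hi
    by_contra hiJ
    have hsub : J.filter (fun k => lam k = lam i)
        ⊆ (Finset.univ.filter (fun k => lam k = lam i ∧ i ≤ k)).erase i := by
      intro x hx
      simp only [Finset.mem_filter] at hx
      have hxne : x ≠ i := fun he => hiJ (he ▸ hx.1)
      have hix : i ≤ x := by
        rcases le_or_gt i x with h' | h'
        · exact h'
        · exact absurd (h x hx.1 i h'.le hx.2.symm) hiJ
      exact Finset.mem_erase.2 ⟨hxne, by simp [hx.2, hix]⟩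
    have hcard := Finset.card_le_card hsub
    rw [Finset.card_erase_of_mem (by simp)] at hcard
    have h1 := hfun_pos lam i
    simp only [hfun, cnt] at h1 hi hcard
    omega
  · intro hi
    unfold hfun cnt
    apply Finset.card_le_card
    intro x hx
    simp only [Finset.mem_filter, Finset.mem_univ, true_and] at hx ⊢
    exact ⟨h i hi x hx.2 hx.1, hx.1⟩

lemma antitone_mu_NN (hlam : Antitone lam) (K : Finset (Fin n)) :
    Antitone (mu lam (NN lam K)) := by
  intro i k hik
  rcases eq_or_lt_of_le (hlam hik) with heq | hlt
  · -- lam k = lam i : same class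
    by_cases hi : i ∈ NN lam K
    · have hk : k ∈ NN lam K := by
        simp only [NN, Finset.mem_filter, Finset.mem_univ, true_and] at hi ⊢
        calc hfun lam k ≤ hfun lam i := hfun_le_of_le lam hik heq.symm
        _ ≤ cnt lam K i := hi
        _ = cnt lam K k := cnt_congr lam K heq.symm
      simp [mu, hi, hk, heq]
    · have hmi : mu lam (NN lam K) i = lam i := by simp [mu, hi]
      rw [hmi]
      simp only [mu, heq]
      split_ifs <;> omega
  · -- lam k < lam i
    simp only [mu]
    split_ifs <;> omega

end NNlemmas

section Vlemmas

noncomputable def ff (q : ℝ) {n : ℕ} (j k : Fin n) : ℝ :=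
  (1 - q ^ ((k:ℕ) - (j:ℕ) + 1)) / (1 - q ^ ((k:ℕ) - (j:ℕ)))

lemma VU_def (q : ℝ) (lam : Fin n → ℤ) (U J : Finset (Fin n)) :
    VU q lam U J = ∏ j : Fin n, ∏ k : Fin n,
      if j < k ∧ j ∈ U ∧ j ∉ J ∧ k ∈ J ∧ lam j = lam k then ff q j k else 1 := rfl

variable {q : ℝ}

lemma one_sub_pow_ne (hq : 0 < q) (hq1 : q < 1) {t : ℕ} (ht : 1 ≤ t) : (1 : ℝ) - q ^ t ≠ 0 := by
  have : q ^ t < 1 := pow_lt_one₀ hq.le hq1 (by omega)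
  linarith

lemma tel_up (hq : 0 < q) (hq1 : q < 1) (a : ℕ) :
    ∀ y x : ℕ, a < x → x ≤ y + 1 →
      (∏ t ∈ Finset.Icc x y, ((1 - q ^ (t - a + 1)) / (1 - q ^ (t - a))))
        = (1 - q ^ (y + 1 - a)) / (1 - q ^ (x - a)) := by
  intro y
  induction y with
  | zero =>
    intro x hax hx1
    have hx : x = 1 := by omega
    subst hx
    rw [Finset.Icc_eq_empty (by omega), Finset.prod_empty]
    rw [div_self (one_sub_pow_ne hq hq1 (by omega))]
  | succ y ih =>
    intro x hax hx1
    rcases eq_or_lt_of_le hx1 with he | hlt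
    · rw [Finset.Icc_eq_empty (by omega), Finset.prod_empty]
      rw [he, div_self (one_sub_pow_ne hq hq1 (by omega))]
    · have hxy : x ≤ y + 1 := by omega
      rw [Finset.prod_Icc_succ_top hxy, ih x hax hxy]
      have h1 : (1:ℝ) - q ^ (y + 1 - a) ≠ 0 := one_sub_pow_ne hq hq1 (by omega)
      have h2 : (1:ℝ) - q ^ (x - a) ≠ 0 := one_sub_pow_ne hq hq1 (by omega)
      have e1 : y + 1 - a + 1 = y + 1 + 1 - a := by omega
      rw [e1]
      field_simp

lemma tel_down (hq : 0 < q) (hq1 : q < 1) (c : ℕ) :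
    ∀ y x : ℕ, x ≤ y + 1 → y < c →
      (∏ t ∈ Finset.Icc x y, ((1 - q ^ (c - t + 1)) / (1 - q ^ (c - t))))
        = (1 - q ^ (c - x + 1)) / (1 - q ^ (c - y)) := by
  intro y
  induction y with
  | zero =>
    intro x hx1 hyc
    rcases Nat.le_one_iff_eq_zero_or_eq_one.1 hx1 with rfl | rfl
    · rw [Finset.Icc_self, Finset.prod_singleton]
    · rw [Finset.Icc_eq_empty (by omega), Finset.prod_empty]
      have e : c - 1 + 1 = c - 0 := by omega
      rw [e, div_self (one_sub_pow_ne hq hq1 (by omega))]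
  | succ y ih =>
    intro x hx1 hyc
    rcases eq_or_lt_of_le hx1 with he | hlt
    · rw [Finset.Icc_eq_empty (by omega), Finset.prod_empty]
      have e : c - x + 1 = c - (y + 1) := by omega
      rw [e, div_self (one_sub_pow_ne hq hq1 (by omega))]
    · have hxy : x ≤ y + 1 := by omega
      rw [Finset.prod_Icc_succ_top hxy, ih x hxy (by omega)]
      have e1 : c - (y + 1) + 1 = c - y := by omega
      rw [e1]
      have h1 : (1:ℝ) - q ^ (c - y) ≠ 0 := one_sub_pow_ne hq hq1 (by omega)
      have h2 : (1:ℝ) - q ^ (c - (y+1)) ≠ 0 := one_sub_pow_ne hq hq1 (by omega)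
      field_simp
      try ring

lemma prod_fin_val (F : ℕ → ℝ) (s : Finset (Fin n)) :
    (∏ k ∈ s, F k.val) = ∏ t ∈ s.map Fin.valEmbedding, F t := by
  rw [Finset.prod_map]; rfl

/-- peeling off the column `j = a` from `VU` -/
lemma VU_erase_col (q : ℝ) (lam : Fin n → ℤ) {U : Finset (Fin n)} (J : Finset (Fin n))
    {a : Fin n} (ha : a ∈ U) :
    VU q lam U J
      = (∏ k : Fin n, if a < k ∧ a ∉ J ∧ k ∈ J ∧ lam a = lam k then ff q a k else 1)
        * VU q lam (U.erase a) J := by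
  have hcola : (∏ k : Fin n,
      if a < k ∧ a ∈ U.erase a ∧ a ∉ J ∧ k ∈ J ∧ lam a = lam k then ff q a k else 1) = 1 :=
    Finset.prod_eq_one (fun k _ => by simp)
  rw [VU_def, VU_def]
  rw [← Finset.mul_prod_erase Finset.univ _ (Finset.mem_univ a),
      ← Finset.mul_prod_erase Finset.univ
        (fun j => ∏ k : Fin n,
          (if j < k ∧ j ∈ U.erase a ∧ j ∉ J ∧ k ∈ J ∧ lam j = lam k then ff q j k else 1))
        (Finset.mem_univ a)]
  rw [hcola, one_mul]
  congr 1
  · apply Finset.prod_congr rfl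
    intro k _
    congr 1
    simp [ha]
  · apply Finset.prod_congr rfl
    intro j hj
    apply Finset.prod_congr rfl
    intro k _
    have hja : j ≠ a := (Finset.mem_erase.1 hj).1
    congr 1
    simp [Finset.mem_erase, hja]

/-- exchanging row/column factors when erasing `b ∈ J` -/
lemma VU_erase_row (q : ℝ) (lam : Fin n → ℤ) (W : Finset (Fin n)) {J : Finset (Fin n)}
    {b : Fin n} (hb : b ∈ J) :
    VU q lam W J
        * (∏ k : Fin n, if b < k ∧ b ∈ W ∧ k ∈ J.erase b ∧ lam b = lam k then ff q b k else 1)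
      = VU q lam W (J.erase b)
        * (∏ j : Fin n, if j < b ∧ j ∈ W ∧ j ∉ J ∧ lam j = lam b then ff q j b else 1) := by
  classical
  set F : Finset (Fin n) → Fin n → Fin n → ℝ := fun X j k =>
    if j < k ∧ j ∈ W ∧ j ∉ X ∧ k ∈ X ∧ lam j = lam k then ff q j k else 1 with hF
  have key : ∀ X : Finset (Fin n), VU q lam W X
      = (∏ j ∈ Finset.univ.erase b, ∏ k ∈ Finset.univ.erase b, F X j k)
        * (∏ j ∈ Finset.univ.erase b, F X j b) * (∏ k : Fin n, F X b k) := by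
    intro X
    rw [VU_def, ← Finset.mul_prod_erase Finset.univ (fun j => ∏ k : Fin n, F X j k)
      (Finset.mem_univ b)]
    have : ∀ j, (∏ k : Fin n, F X j k) = F X j b * ∏ k ∈ Finset.univ.erase b, F X j k :=
      fun j => (Finset.mul_prod_erase Finset.univ _ (Finset.mem_univ b)).symm
    rw [Finset.prod_congr rfl (fun j _ => this j)]
    rw [Finset.prod_mul_distrib]
    ring
  have hJb : (∏ k : Fin n, F J b k) = 1 := by
    apply Finset.prod_eq_one
    intro k _
    simp [hF, hb]
  have hJ'b : (∏ j ∈ Finset.univ.erase b, F (J.erase b) j b) = 1 := by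
    apply Finset.prod_eq_one
    intro j _
    simp [hF]
  have hcore : (∏ j ∈ Finset.univ.erase b, ∏ k ∈ Finset.univ.erase b, F J j k)
      = (∏ j ∈ Finset.univ.erase b, ∏ k ∈ Finset.univ.erase b, F (J.erase b) j k) := by
    apply Finset.prod_congr rfl
    intro j hj
    apply Finset.prod_congr rfl
    intro k hk
    have hjb : j ≠ b := (Finset.mem_erase.1 hj).1
    have hkb : k ≠ b := (Finset.mem_erase.1 hk).1
    simp only [hF]
    congr 1
    simp only [Finset.mem_erase, ne_eq, eq_iff_iff]
    constructor
    · rintro ⟨h1,h2,h3,h4,h5⟩; exact ⟨h1,h2, fun hc => h3 hc.2, ⟨hkb, h4⟩, h5⟩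
    · rintro ⟨h1,h2,h3,h4,h5⟩; exact ⟨h1,h2, fun hc => h3 ⟨hjb, hc⟩, h4.2, h5⟩
  have hGB : (∏ k : Fin n, F (J.erase b) b k)
      = ∏ k : Fin n, (if b < k ∧ b ∈ W ∧ k ∈ J.erase b ∧ lam b = lam k then ff q b k else 1) := by
    apply Finset.prod_congr rfl
    intro k _
    simp only [hF]
    congr 1
    simp only [Finset.mem_erase, ne_eq, eq_iff_iff]
    constructor
    · rintro ⟨h1,h2,_,h4,h5⟩; exact ⟨h1,h2,h4,h5⟩
    · rintro ⟨h1,h2,h4,h5⟩; exact ⟨h1,h2, by simp, h4, h5⟩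
  have hLB : (∏ j ∈ Finset.univ.erase b, F J j b)
      = ∏ j : Fin n, (if j < b ∧ j ∈ W ∧ j ∉ J ∧ lam j = lam b then ff q j b else 1) := by
    rw [← Finset.mul_prod_erase Finset.univ
      (fun j => if j < b ∧ j ∈ W ∧ j ∉ J ∧ lam j = lam b then ff q j b else 1)
      (Finset.mem_univ b)]
    rw [if_neg (by simp), one_mul]
    apply Finset.prod_congr rfl
    intro j _
    simp only [hF, hb, true_and, and_true]
  rw [key J, key (J.erase b), hJb, hJ'b, hcore, hGB, hLB]
  ring

end Vlemmas

section ddlemmas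

variable (lam : Fin n → ℤ)

lemma dd_insert {K : Finset (Fin n)} {a : Fin n} (hal : ∀ x ∈ K, a < x) :
    dd lam (insert a K) = dd lam K
      + ((Finset.univ.filter (fun k => lam k = lam a ∧ a ≤ k)).filter
          (fun k => k ∉ insert a K)).card := by
  classical
  have haK : a ∉ K := fun h => lt_irrefl a (hal a h)
  set X := ((Finset.univ.filter (fun k => lam k = lam a ∧ a ≤ k)).filter
      (fun k => k ∉ insert a K)).image (fun k => ((a, k) : Fin n × Fin n)) with hX
  have hunion : (Finset.univ ×ˢ Finset.univ : Finset (Fin n × Fin n)).filter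
      (fun p => p.1 ∈ insert a K ∧ p.2 ∉ insert a K ∧ p.1 < p.2 ∧ lam p.1 = lam p.2)
      = ((Finset.univ ×ˢ Finset.univ : Finset (Fin n × Fin n)).filter
      (fun p => p.1 ∈ K ∧ p.2 ∉ K ∧ p.1 < p.2 ∧ lam p.1 = lam p.2)) ∪ X := by
    ext ⟨p1, p2⟩
    simp only [Finset.mem_filter, Finset.mem_union, Finset.mem_product, Finset.mem_univ,
      true_and, hX, Finset.mem_image, Finset.mem_insert, not_or]
    constructor
    · rintro ⟨h1 | h1, h2, h3, h4⟩
      · subst h1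
        right
        exact ⟨p2, ⟨⟨h4.symm, h3.le⟩, h2.1, h2.2⟩, rfl⟩
      · left
        exact ⟨h1, h2.2, h3, h4⟩
    · rintro (⟨h1, h2, h3, h4⟩ | ⟨k, hk, hke⟩)
      · refine ⟨Or.inr h1, ⟨?_, h2⟩, h3, h4⟩
        intro he
        exact absurd h3 (not_lt.2 (he ▸ (hal p1 h1)).le)
      · obtain ⟨he1, he2⟩ := Prod.ext_iff.mp hke
        simp only at he1 he2
        subst he1; subst he2
        exact ⟨Or.inl rfl, ⟨hk.2.1, hk.2.2⟩, lt_of_le_of_ne hk.1.2 (fun he => hk.2.1 he.symm), hk.1.1.symm⟩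
  have hdisj : Disjoint ((Finset.univ ×ˢ Finset.univ : Finset (Fin n × Fin n)).filter
      (fun p => p.1 ∈ K ∧ p.2 ∉ K ∧ p.1 < p.2 ∧ lam p.1 = lam p.2)) X := by
    rw [Finset.disjoint_left]
    rintro ⟨p1, p2⟩ hp hpX
    simp only [hX, Finset.mem_image] at hpX
    obtain ⟨k, _, hke⟩ := hpX
    have ha1 : a = p1 := (Prod.ext_iff.mp hke).1
    simp only [Finset.mem_filter] at hp
    exact haK (ha1 ▸ hp.2.1)
  rw [dd, dd, hunion, Finset.card_union_of_disjoint hdisj, hX,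
    Finset.card_image_of_injective _ (fun x y h => by simpa using h)]

end ddlemmas

section Smain

variable {q : ℝ}

lemma S_main (hq : 0 < q) (hq1 : q < 1) (lam : Fin n → ℤ) (hlam : Antitone lam) :
    ∀ (N : ℕ) (U J : Finset (Fin n)), U.card = N → J ⊆ U →
      upClosed lam U → upClosed lam J →
      (∑ K ∈ U.powerset,
        if (∀ i, cnt lam K i = cnt lam J i) then (q : ℝ) ^ dd lam K else 0)
        = VU q lam U J := by
  intro N
  induction N using Nat.strong_induction_on with
  | _ N IH =>
  intro U J hcard hJU hUc hJc
  rcases Nat.eq_zero_or_pos N with rfl | hN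
  · -- base case
    have hU : U = ∅ := Finset.card_eq_zero.1 hcard
    subst hU
    have hJ : J = ∅ := Finset.subset_empty.1 hJU
    subst hJ
    rw [Finset.powerset_empty, Finset.sum_singleton, if_pos (fun i => rfl)]
    have hdd : dd lam ∅ = 0 := by
      rw [dd, Finset.card_eq_zero]
      apply Finset.filter_false_of_mem
      intro p _
      simp
    rw [hdd, pow_zero, VU_def]
    symm
    apply Finset.prod_eq_one; intro j _
    apply Finset.prod_eq_one; intro k _
    simp
  -- inductive step
  have hUne : U.Nonempty := Finset.card_pos.1 (by omega)
  set a := U.min' hUne with haa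
  have haU : a ∈ U := U.min'_mem hUne
  have hamin : ∀ x ∈ U, a ≤ x := fun x hx => U.min'_le x hx
  set U' := U.erase a with hU'
  have haU' : a ∉ U' := Finset.notMem_erase a U
  have hins : insert a U' = U := Finset.insert_erase haU
  have hU'card : U'.card = N - 1 := by rw [hU', Finset.card_erase_of_mem haU, hcard]
  have hU'sub : U' ⊆ U := Finset.erase_subset a U
  have hU'c : upClosed lam U' := by
    intro i hi k hik hki
    have hiU : i ∈ U := Finset.mem_of_mem_erase hi
    have hia : i ≠ a := (Finset.mem_erase.1 hi).1
    have hk : k ∈ U := hUc i hiU k hik hki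
    refine Finset.mem_erase.2 ⟨?_, hk⟩
    intro he
    exact hia (le_antisymm (he ▸ hik) (hamin i hiU))
  have halU' : ∀ x ∈ U', a < x := fun x hx =>
    lt_of_le_of_ne (hamin x (hU'sub hx)) (fun he => (Finset.mem_erase.1 hx).1 he.symm)
  set G := Finset.univ.filter (fun k => lam k = lam a ∧ a ≤ k) with hG
  have haG : a ∈ G := by simp [hG]
  have hGne : G.Nonempty := ⟨a, haG⟩
  set g := G.max' hGne with hgg
  have hgG : g ∈ G := G.max'_mem hGne
  have hglam : lam g = lam a := (Finset.mem_filter.1 hgG).2.1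
  have hag : a ≤ g := (Finset.mem_filter.1 hgG).2.2
  have hGIcc : G = Finset.Icc a g := by
    ext x
    simp only [hG, Finset.mem_filter, Finset.mem_univ, true_and, Finset.mem_Icc]
    constructor
    · intro hx
      exact ⟨hx.2, G.le_max' x (by simp [hG, hx.1, hx.2])⟩
    · intro hx
      exact ⟨le_antisymm (hlam hx.1) (hglam ▸ hlam hx.2), hx.1⟩
  set m := G.card with hm
  have hmval : m = (g : ℕ) + 1 - (a : ℕ) := by rw [hm, hGIcc, Fin.card_Icc]
  have hm1 : 1 ≤ m := Finset.card_pos.2 hGne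
  set s := cnt lam J a with hs
  have hJG : J.filter (fun k => lam k = lam a) ⊆ G := by
    intro x hx
    simp only [Finset.mem_filter] at hx
    simp only [hG, Finset.mem_filter, Finset.mem_univ, true_and]
    exact ⟨hx.2, hamin x (hJU hx.1)⟩
  have hsm : s ≤ m := by
    rw [hs, cnt, hm]; exact Finset.card_le_card hJG
  -- sum splitting
  have hsplit := Finset.sum_powerset_insert haU'
    (fun K => if (∀ i, cnt lam K i = cnt lam J i) then (q : ℝ) ^ dd lam K else 0)
  rw [hins] at hsplit
  rw [hsplit]
  -- bound for counts of subsets of U'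
  have hcntU' : ∀ K : Finset (Fin n), K ⊆ U' → cnt lam K a + 1 ≤ m := by
    intro K hK
    have hsub : K.filter (fun k => lam k = lam a) ⊆ G.erase a := by
      intro x hx
      simp only [Finset.mem_filter] at hx
      refine Finset.mem_erase.2 ⟨(Finset.mem_erase.1 (hK hx.1)).1, ?_⟩
      simp only [hG, Finset.mem_filter, Finset.mem_univ, true_and]
      exact ⟨hx.2, hamin x (hU'sub (hK hx.1))⟩
    have := Finset.card_le_card hsub
    rw [Finset.card_erase_of_mem haG] at this
    rw [cnt]
    omega
  rcases Nat.eq_zero_or_pos s with hs0 | hs1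
  · -- CASE s = 0
    have hJCempty : J.filter (fun k => lam k = lam a) = ∅ := by
      rw [← Finset.card_eq_zero]; exact hs0
    have haJ : a ∉ J := by
      intro h
      have : a ∈ J.filter (fun k => lam k = lam a) := by simp [h]
      rw [hJCempty] at this
      exact absurd this (Finset.notMem_empty a)
    have hb1 : (∑ K ∈ U'.powerset,
        if (∀ i, cnt lam (insert a K) i = cnt lam J i) then (q : ℝ) ^ dd lam (insert a K) else 0)
        = 0 := by
      apply Finset.sum_eq_zero
      intro K hK
      have hKU' : K ⊆ U' := Finset.mem_powerset.1 hK
      have haK : a ∉ K := fun h => haU' (hKU' h)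
      rw [if_neg]
      intro hc
      have := hc a
      rw [cnt_insert lam haK a, if_pos rfl] at this
      omega
    have hb0 : (∑ K ∈ U'.powerset,
        if (∀ i, cnt lam K i = cnt lam J i) then (q : ℝ) ^ dd lam K else 0)
        = VU q lam U' J := by
      apply IH (N-1) (by omega) U' J hU'card ?_ hU'c hJc
      intro x hx
      exact Finset.mem_erase.2 ⟨fun he => haJ (he ▸ hx), hJU hx⟩
    rw [hb0, hb1, add_zero]
    rw [VU_erase_col q lam J haU]
    have hcol : (∏ k : Fin n, if a < k ∧ a ∉ J ∧ k ∈ J ∧ lam a = lam k then ff q a k else 1)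
        = 1 := by
      apply Finset.prod_eq_one
      intro k _
      rw [if_neg]
      rintro ⟨_, _, h3, h4⟩
      have : k ∈ J.filter (fun k => lam k = lam a) := by simp [h3, h4.symm]
      rw [hJCempty] at this
      exact absurd this (Finset.notMem_empty k)
    rw [hcol, one_mul]
  -- CASE s ≥ 1
  set JC := J.filter (fun k => lam k = lam a) with hJC
  have hJCne : JC.Nonempty := Finset.card_pos.1 (by rw [hJC, ← cnt]; omega)
  set b := JC.min' hJCne with hbb
  have hbJC : b ∈ JC := JC.min'_mem hJCne
  have hbJ : b ∈ J := (Finset.mem_filter.1 hbJC).1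
  have hblam : lam b = lam a := (Finset.mem_filter.1 hbJC).2
  have hbG : b ∈ G := hJG hbJC
  have hab : a ≤ b := (Finset.mem_filter.1 hbG).2.2
  have hbg : b ≤ g := G.le_max' b hbG
  have hJCIcc : JC = Finset.Icc b g := by
    ext x
    constructor
    · intro hx
      exact Finset.mem_Icc.2 ⟨JC.min'_le x hx, G.le_max' x (hJG hx)⟩
    · intro hx
      have hx' := Finset.mem_Icc.1 hx
      have hgb : lam g = lam b := hglam.trans hblam.symm
      have hxlam : lam x = lam b := le_antisymm (hlam hx'.1) (hgb ▸ hlam hx'.2)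
      refine Finset.mem_filter.2 ⟨hJc b hbJ x hx'.1 hxlam, hxlam.trans hblam⟩
  have hsval : s = (g : ℕ) + 1 - (b : ℕ) := by
    rw [hs, cnt, ← hJC, hJCIcc, Fin.card_Icc]
  have hab' : (a : ℕ) ≤ (b : ℕ) := hab
  have hbg' : (b : ℕ) ≤ (g : ℕ) := hbg
  have hag' : (a : ℕ) ≤ (g : ℕ) := hag
  set J' := J.erase b with hJ'
  have hJ'c : upClosed lam J' := by
    intro i hi k hik hki
    have hiJ : i ∈ J := Finset.mem_of_mem_erase hi
    have hib : i ≠ b := (Finset.mem_erase.1 hi).1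
    have hkJ : k ∈ J := hJc i hiJ k hik hki
    refine Finset.mem_erase.2 ⟨?_, hkJ⟩
    intro he
    subst he
    -- k = b, i ≤ b, lam b = lam i hence i ∈ JC so b ≤ i, i = b
    have hiJC : i ∈ JC := Finset.mem_filter.2 ⟨hiJ, hki ▸ hblam⟩
    exact hib (le_antisymm hik (JC.min'_le i hiJC))
  have hcnt_erase_b : ∀ i, cnt lam J' i + (if lam a = lam i then 1 else 0) = cnt lam J i := by
    intro i
    have := cnt_erase lam hbJ i
    rwa [show (if lam b = lam i then 1 else 0) = (if lam a = lam i then 1 else 0) by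
      rw [hblam]] at this
  have hJ'a : cnt lam J' a + 1 = s := by
    have := hcnt_erase_b a
    rw [if_pos rfl] at this
    omega
  have hJ'U' : J' ⊆ U' := by
    intro x hx
    have hxJ : x ∈ J := Finset.mem_of_mem_erase hx
    refine Finset.mem_erase.2 ⟨?_, hJU hxJ⟩
    intro he
    have hba : b = a := le_antisymm (JC.min'_le a (Finset.mem_filter.2 ⟨he ▸ hxJ, rfl⟩)) hab
    exact (Finset.mem_erase.1 hx).1 (he.trans hba.symm)
  -- branch 1 evaluation
  have hb1 : (∑ K ∈ U'.powerset,
      if (∀ i, cnt lam (insert a K) i = cnt lam J i) then (q : ℝ) ^ dd lam (insert a K) else 0)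
      = q ^ (m - s) * VU q lam U' J' := by
    rw [← IH (N-1) (by omega) U' J' hU'card hJ'U' hU'c hJ'c, Finset.mul_sum]
    apply Finset.sum_congr rfl
    intro K hK
    have hKU' : K ⊆ U' := Finset.mem_powerset.1 hK
    have haK : a ∉ K := fun h => haU' (hKU' h)
    have hal : ∀ x ∈ K, a < x := fun x hx => halU' x (hKU' hx)
    by_cases hcond : ∀ i, cnt lam K i = cnt lam J' i
    · rw [if_pos hcond, if_pos (fun i => by
        rw [cnt_insert lam haK i, hcond i]
        have h2 := hcnt_erase_b i
        by_cases hli : lam a = lam i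
        · rw [if_pos hli] at h2 ⊢; omega
        · rw [if_neg hli] at h2 ⊢; omega)]
      rw [dd_insert lam hal]
      have hcard2 : (G.filter (fun k => k ∈ insert a K)).card = s := by
        have hfe : G.filter (fun k => k ∈ insert a K)
            = insert a (K.filter (fun k => lam k = lam a)) := by
          ext x
          simp only [Finset.mem_filter, Finset.mem_insert]
          constructor
          · rintro ⟨hxG, rfl | hxK⟩
            · exact Or.inl rfl
            · exact Or.inr ⟨hxK, ((Finset.mem_filter.1 (hG ▸ hxG)).2).1⟩
          · rintro (rfl | ⟨hxK, hxlam⟩)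
            · exact ⟨haG, Or.inl rfl⟩
            · exact ⟨hG ▸ Finset.mem_filter.2 ⟨Finset.mem_univ _, hxlam, (hal x hxK).le⟩, Or.inr hxK⟩
        rw [hfe, Finset.card_insert_of_notMem (fun h => haK (Finset.mem_filter.1 h).1)]
        have hculk : (K.filter (fun k => lam k = lam a)).card = cnt lam K a := rfl
        rw [hculk, hcond a]
        omega
      have hcard3 : (G.filter (fun k => k ∉ insert a K)).card = m - s := by
        have := Finset.card_filter_add_card_filter_not
          (s := G) (p := fun k => k ∈ insert a K)
        rw [hcard2] at this
        omega
      rw [hcard3, pow_add, mul_comm]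
    · rw [if_neg hcond, if_neg, mul_zero]
      intro hc
      apply hcond
      intro i
      have h1 := hc i
      rw [cnt_insert lam haK i] at h1
      have h2 := hcnt_erase_b i
      by_cases hli : lam a = lam i
      · rw [if_pos hli] at h1 h2; omega
      · rw [if_neg hli] at h1 h2; omega
  rw [hb1]
  by_cases haJ : a ∈ J
  · -- SUBCASE a ∈ J : here b = a and s = m
    have hba : b = a := le_antisymm (JC.min'_le a (Finset.mem_filter.2 ⟨haJ, rfl⟩)) hab
    have hsm2 : s = m := by
      rw [hs, cnt, ← hJC, hJCIcc, hm, hGIcc, hba]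
    have hb0 : (∑ K ∈ U'.powerset,
        if (∀ i, cnt lam K i = cnt lam J i) then (q : ℝ) ^ dd lam K else 0) = 0 := by
      apply Finset.sum_eq_zero
      intro K hK
      have hKU' : K ⊆ U' := Finset.mem_powerset.1 hK
      rw [if_neg]
      intro hc
      have h1 := hc a
      have h2 := hcntU' K hKU'
      omega
    rw [hb0, zero_add, hsm2, Nat.sub_self, pow_zero, one_mul]
    rw [VU_erase_col q lam J haU]
    have hcol : (∏ k : Fin n, if a < k ∧ a ∉ J ∧ k ∈ J ∧ lam a = lam k then ff q a k else 1)
        = 1 := Finset.prod_eq_one (fun k _ => by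
          rw [if_neg]; rintro ⟨_, hc, _, _⟩; exact hc haJ)
    rw [hcol, one_mul]
    -- VU U' J = VU U' J'  via VU_erase_row with trivial side products
    have hrow := VU_erase_row q lam U' hbJ
    have hGB : (∏ k : Fin n,
        if b < k ∧ b ∈ U' ∧ k ∈ J.erase b ∧ lam b = lam k then ff q b k else 1) = 1 :=
      Finset.prod_eq_one (fun k _ => by
        rw [if_neg]; rintro ⟨_, hc, _, _⟩; rw [hba] at hc; exact haU' hc)
    have hLB : (∏ j : Fin n,
        if j < b ∧ j ∈ U' ∧ j ∉ J ∧ lam j = lam b then ff q j b else 1) = 1 :=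
      Finset.prod_eq_one (fun j _ => by
        rw [if_neg]; rintro ⟨hc1, hc2, _, _⟩
        rw [hba] at hc1
        exact absurd hc1 (not_lt.2 (hamin j (hU'sub hc2))))
    rw [hGB, hLB, mul_one, mul_one] at hrow
    rw [← hJ'] at hrow
    rw [← hU']
    exact hrow.symm
  · -- SUBCASE a ∉ J : 1 ≤ s < m
    have hab2 : a < b := lt_of_le_of_ne hab (fun he => haJ (he ▸ hbJ))
    have hab2' : (a : ℕ) < (b : ℕ) := hab2
    have hsm2 : s < m := by omega
    have hb0 : (∑ K ∈ U'.powerset,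
        if (∀ i, cnt lam K i = cnt lam J i) then (q : ℝ) ^ dd lam K else 0)
        = VU q lam U' J := by
      apply IH (N-1) (by omega) U' J hU'card ?_ hU'c hJc
      intro x hx
      exact Finset.mem_erase.2 ⟨fun he => haJ (he ▸ hx), hJU hx⟩
    rw [hb0]
    -- compute the three products
    rw [VU_erase_col q lam J haU, ← hU']
    have hcol : (∏ k : Fin n, if a < k ∧ a ∉ J ∧ k ∈ J ∧ lam a = lam k then ff q a k else 1)
        = (1 - q ^ m) / (1 - q ^ (m - s)) := by
      have hfe : Finset.univ.filter (fun k => a < k ∧ a ∉ J ∧ k ∈ J ∧ lam a = lam k)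
          = Finset.Icc b g := by
        ext x
        simp only [Finset.mem_filter, Finset.mem_univ, true_and]
        constructor
        · rintro ⟨_, _, h3, h4⟩
          rw [← hJCIcc]
          exact Finset.mem_filter.2 ⟨h3, h4.symm⟩
        · intro hx
          rw [← hJCIcc] at hx
          have hx' := Finset.mem_filter.1 hx
          exact ⟨lt_of_lt_of_le hab2 (JC.min'_le x hx), haJ, hx'.1, hx'.2.symm⟩
      rw [← Finset.prod_filter, hfe]
      have : ∀ x ∈ Finset.Icc b g, ff q a x
          = (1 - q ^ ((x:ℕ) - (a:ℕ) + 1)) / (1 - q ^ ((x:ℕ) - (a:ℕ))) := fun x _ => rfl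
      rw [Finset.prod_congr rfl this]
      have hmap : (∏ x ∈ Finset.Icc b g,
          (1 - q ^ ((x:ℕ) - (a:ℕ) + 1)) / (1 - q ^ ((x:ℕ) - (a:ℕ))))
          = ∏ t ∈ Finset.Icc (b:ℕ) (g:ℕ),
          (1 - q ^ (t - (a:ℕ) + 1)) / (1 - q ^ (t - (a:ℕ))) := by
        rw [← Fin.map_valEmbedding_Icc, Finset.prod_map]
        rfl
      rw [hmap, tel_up hq hq1 (a:ℕ) (g:ℕ) (b:ℕ) hab2' (by omega)]
      rw [show (g:ℕ) + 1 - (a:ℕ) = m by omega, show (b:ℕ) - (a:ℕ) = m - s by omega]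
    rw [hcol]
    have hrow := VU_erase_row q lam U' hbJ
    have hbU' : b ∈ U' := Finset.mem_erase.2 ⟨fun he => haJ (he ▸ hbJ), hJU hbJ⟩
    have hGB : (∏ k : Fin n,
        if b < k ∧ b ∈ U' ∧ k ∈ J.erase b ∧ lam b = lam k then ff q b k else 1)
        = (1 - q ^ s) / (1 - q) := by
      have hfe : Finset.univ.filter (fun k => b < k ∧ b ∈ U' ∧ k ∈ J.erase b ∧ lam b = lam k)
          = Finset.Ioc b g := by
        ext x
        simp only [Finset.mem_filter, Finset.mem_univ, true_and, Finset.mem_Ioc, Finset.mem_erase]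
        constructor
        · rintro ⟨h1, _, ⟨_, h3⟩, h4⟩
          have : x ∈ JC := Finset.mem_filter.2 ⟨h3, h4.symm.trans hblam⟩
          exact ⟨h1, G.le_max' x (hJG this)⟩
        · rintro ⟨h1, h2⟩
          have hx : x ∈ JC := by rw [hJCIcc]; exact Finset.mem_Icc.2 ⟨h1.le, h2⟩
          have hx' := Finset.mem_filter.1 hx
          exact ⟨h1, hbU', ⟨fun he => absurd h1 (he ▸ lt_irrefl x), hx'.1⟩,
            (hx'.2.trans hblam.symm).symm⟩
      rw [← Finset.prod_filter, hfe]
      have : ∀ x ∈ Finset.Ioc b g, ff q b x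
          = (1 - q ^ ((x:ℕ) - (b:ℕ) + 1)) / (1 - q ^ ((x:ℕ) - (b:ℕ))) := fun x _ => rfl
      rw [Finset.prod_congr rfl this]
      have hmap : (∏ x ∈ Finset.Ioc b g,
          (1 - q ^ ((x:ℕ) - (b:ℕ) + 1)) / (1 - q ^ ((x:ℕ) - (b:ℕ))))
          = ∏ t ∈ Finset.Icc ((b:ℕ)+1) (g:ℕ),
          (1 - q ^ (t - (b:ℕ) + 1)) / (1 - q ^ (t - (b:ℕ))) := by
        rw [Finset.Icc_add_one_left_eq_Ioc, ← Fin.map_valEmbedding_Ioc, Finset.prod_map]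
        rfl
      rw [hmap, tel_up hq hq1 (b:ℕ) (g:ℕ) ((b:ℕ)+1) (by omega) (by omega)]
      rw [show (g:ℕ) + 1 - (b:ℕ) = s by omega, show (b:ℕ) + 1 - (b:ℕ) = 1 by omega, pow_one]
    have hLB : (∏ j : Fin n,
        if j < b ∧ j ∈ U' ∧ j ∉ J ∧ lam j = lam b then ff q j b else 1)
        = (1 - q ^ (m - s)) / (1 - q) := by
      have hfe : Finset.univ.filter (fun j => j < b ∧ j ∈ U' ∧ j ∉ J ∧ lam j = lam b)
          = Finset.Ioo a b := by
        ext x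
        simp only [Finset.mem_filter, Finset.mem_univ, true_and, Finset.mem_Ioo]
        constructor
        · rintro ⟨h1, h2, _, _⟩
          exact ⟨halU' x h2, h1⟩
        · rintro ⟨h1, h2⟩
          have hxlam : lam x = lam a :=
            le_antisymm (hlam h1.le) (hblam ▸ hlam h2.le)
          have hxU : x ∈ U := hUc a haU x h1.le hxlam
          refine ⟨h2, Finset.mem_erase.2 ⟨fun he => absurd h1 (he ▸ lt_irrefl a), hxU⟩, ?_,
            hxlam.trans hblam.symm⟩
          intro hxJ
          have : x ∈ JC := Finset.mem_filter.2 ⟨hxJ, hxlam⟩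
          exact absurd (JC.min'_le x this) (not_le.2 h2)
      rw [← Finset.prod_filter, hfe]
      have : ∀ x ∈ Finset.Ioo a b, ff q x b
          = (1 - q ^ ((b:ℕ) - (x:ℕ) + 1)) / (1 - q ^ ((b:ℕ) - (x:ℕ))) := fun x _ => rfl
      rw [Finset.prod_congr rfl this]
      have hmap : (∏ x ∈ Finset.Ioo a b,
          (1 - q ^ ((b:ℕ) - (x:ℕ) + 1)) / (1 - q ^ ((b:ℕ) - (x:ℕ))))
          = ∏ t ∈ Finset.Icc ((a:ℕ)+1) ((b:ℕ)-1),
          (1 - q ^ ((b:ℕ) - t + 1)) / (1 - q ^ ((b:ℕ) - t)) := by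
        have hIoo : Finset.Ioo (a:ℕ) (b:ℕ) = Finset.Icc ((a:ℕ)+1) ((b:ℕ)-1) := by
          ext t
          simp only [Finset.mem_Ioo, Finset.mem_Icc]
          omega
        rw [← hIoo, ← Fin.map_valEmbedding_Ioo, Finset.prod_map]
        rfl
      rw [hmap, tel_down hq hq1 (b:ℕ) ((b:ℕ)-1) ((a:ℕ)+1) (by omega) (by omega)]
      rw [show (b:ℕ) - ((a:ℕ)+1) + 1 = m - s by omega,
        show (b:ℕ) - ((b:ℕ)-1) = 1 by omega, pow_one]
    rw [hGB, hLB, ← hJ'] at hrow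
    -- final algebra
    have hne1 : (1:ℝ) - q ≠ 0 := by
      have := one_sub_pow_ne hq hq1 (t := 1) le_rfl
      rwa [pow_one] at this
    have hnems : (1:ℝ) - q ^ (m - s) ≠ 0 := one_sub_pow_ne hq hq1 (by omega)
    have hLBne : ((1:ℝ) - q ^ (m - s)) / (1 - q) ≠ 0 := div_ne_zero hnems hne1
    have hqm : q ^ (m - s) * q ^ s = q ^ m := by
      rw [← pow_add]
      congr 1
      omega
    apply mul_right_cancel₀ hLBne
    rw [add_mul, mul_assoc (q ^ (m-s)) (VU q lam U' J'), ← hrow]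
    field_simp
    linear_combination (-(VU q lam U' J)) * hqm
end Smain

section swap

lemma swap_lt_iff {a c : Fin n} (hac : (a:ℕ) + 1 = (c:ℕ)) :
    ∀ j k : Fin n, ¬(j = a ∧ k = c) → ¬(j = c ∧ k = a) →
      (Equiv.swap a c j < Equiv.swap a c k ↔ j < k) := by
  have hval : ∀ x : Fin n, ((Equiv.swap a c x : Fin n) : ℕ)
      = if (x:ℕ) = (a:ℕ) then (c:ℕ) else if (x:ℕ) = (c:ℕ) then (a:ℕ) else (x:ℕ) := by
    intro x
    rcases eq_or_ne x a with h | hxa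
    · rw [h, Equiv.swap_apply_left, if_pos rfl]
    · rcases eq_or_ne x c with h | hxc
      · rw [h, Equiv.swap_apply_right, if_neg (by omega : ¬ (c:ℕ) = (a:ℕ)), if_pos rfl]
      · rw [Equiv.swap_apply_of_ne_of_ne hxa hxc,
          if_neg (fun hc => hxa (Fin.ext hc)), if_neg (fun hc => hxc (Fin.ext hc))]
  intro j k h1 h2
  have h1' : ¬((j:ℕ) = (a:ℕ) ∧ (k:ℕ) = (c:ℕ)) :=
    fun he => h1 ⟨Fin.ext he.1, Fin.ext he.2⟩
  have h2' : ¬((j:ℕ) = (c:ℕ) ∧ (k:ℕ) = (a:ℕ)) :=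
    fun he => h2 ⟨Fin.ext he.1, Fin.ext he.2⟩
  rw [Fin.lt_def, Fin.lt_def, hval j, hval k]
  split_ifs <;> omega

lemma lam_swap (lam : Fin n → ℤ) {a c : Fin n} (hl : lam a = lam c) (j : Fin n) :
    lam (Equiv.swap a c j) = lam j := by
  rcases eq_or_ne j a with rfl | hja
  · rw [Equiv.swap_apply_left, hl]
  rcases eq_or_ne j c with rfl | hjc
  · rw [Equiv.swap_apply_right, hl]
  · rw [Equiv.swap_apply_of_ne_of_ne hja hjc]

noncomputable def DD (q : ℝ) (u v : ℝ) : ℂ :=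
  (1 - (q:ℂ) * Complex.exp (I * ((v:ℂ) - (u:ℂ)))) / (1 - Complex.exp (I * ((v:ℂ) - (u:ℂ))))

lemma Cfun_eq (q : ℝ) (y : Fin n → ℝ) :
    Cfun q y = ∏ p ∈ (Finset.univ ×ˢ Finset.univ : Finset (Fin n × Fin n)),
      (if p.1 < p.2 then DD q (y p.1) (y p.2) else 1) := by
  unfold Cfun
  rw [← Finset.prod_product']
  rfl

lemma Cfun_swap (q : ℝ) (y : Fin n → ℝ) {a c : Fin n} (hac : (a:ℕ) + 1 = (c:ℕ)) :
    Cfun q (y ∘ Equiv.swap a c) * DD q (y a) (y c) = Cfun q y * DD q (y c) (y a) := by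
  classical
  have hlt : a < c := by rw [Fin.lt_def]; omega
  have hne : a ≠ c := ne_of_lt hlt
  set s := Equiv.swap a c with hsdef
  have hss : ∀ x, s (s x) = x := fun x => Equiv.swap_apply_self a c x
  set G : Fin n × Fin n → ℂ := fun p => if s p.1 < s p.2 then DD q (y p.1) (y p.2) else 1
    with hGdef
  have hL : Cfun q (y ∘ s) = ∏ p : Fin n × Fin n, G p := by
    rw [Cfun_eq, Finset.univ_product_univ]
    rw [← Equiv.prod_comp (Equiv.prodCongr s s) G]
    apply Finset.prod_congr rfl
    intro p _
    simp only [hGdef, Equiv.prodCongr_apply, Prod.map, hss, Function.comp_apply]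
  set H : Fin n × Fin n → ℂ := fun p => if p.1 < p.2 then DD q (y p.1) (y p.2) else 1
    with hHdef
  have hR : Cfun q y = ∏ p : Fin n × Fin n, H p := by
    rw [Cfun_eq, Finset.univ_product_univ]
  rw [hL, hR]
  have hmem1 : ((a,c) : Fin n × Fin n) ∈ (Finset.univ : Finset (Fin n × Fin n)) :=
    Finset.mem_univ _
  have hmem2 : ((c,a) : Fin n × Fin n) ∈
      (Finset.univ : Finset (Fin n × Fin n)).erase (a,c) := by
    refine Finset.mem_erase.2 ⟨?_, Finset.mem_univ _⟩
    intro he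
    exact hne ((Prod.ext_iff.1 he).1.symm)
  have split : ∀ T : Fin n × Fin n → ℂ, (∏ p : Fin n × Fin n, T p)
      = T (a,c) * (T (c,a) * ∏ p ∈ (Finset.univ.erase ((a,c) : Fin n × Fin n)).erase (c,a), T p) := by
    intro T
    rw [← Finset.mul_prod_erase _ T hmem1, ← Finset.mul_prod_erase _ T hmem2]
  rw [split G, split H]
  have hsac : s a = c := by rw [hsdef]; exact Equiv.swap_apply_left a c
  have hsca : s c = a := by rw [hsdef]; exact Equiv.swap_apply_right a c
  have hGac : G (a,c) = 1 := by
    simp only [hGdef]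
    rw [if_neg]
    show ¬ (s a < s c)
    rw [hsac, hsca]
    exact not_lt.2 hlt.le
  have hGca : G (c,a) = DD q (y c) (y a) := by
    simp only [hGdef]
    rw [if_pos]
    show s c < s a
    rw [hsac, hsca]
    exact hlt
  have hHac : H (a,c) = DD q (y a) (y c) := by
    simp only [hHdef]; rw [if_pos hlt]
  have hHca : H (c,a) = 1 := by
    simp only [hHdef]; rw [if_neg (not_lt.2 hlt.le)]
  have hrest : (∏ p ∈ (Finset.univ.erase ((a,c) : Fin n × Fin n)).erase (c,a), G p)
      = ∏ p ∈ (Finset.univ.erase ((a,c) : Fin n × Fin n)).erase (c,a), H p := by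
    apply Finset.prod_congr rfl
    intro p hp
    have hp1 : p ≠ (c,a) := (Finset.mem_erase.1 hp).1
    have hp2 : p ≠ (a,c) := (Finset.mem_erase.1 (Finset.mem_of_mem_erase hp)).1
    simp only [hGdef, hHdef]
    congr 1
    rw [eq_iff_iff]
    apply swap_lt_iff hac p.1 p.2
    · rintro ⟨e1, e2⟩; exact hp2 (Prod.ext_iff.2 ⟨e1, e2⟩)
    · rintro ⟨e1, e2⟩; exact hp1 (Prod.ext_iff.2 ⟨e1, e2⟩)
  rw [hGac, hGca, hHac, hHca, hrest]
  ring

lemma exp_ne_of_ne {xi : Fin n → ℝ} (hxi : StrictAnti xi)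
    (hxiU : ∀ j, xi j < Real.pi) (hxiL : ∀ j, -Real.pi < xi j)
    {j k : Fin n} (hjk : j ≠ k) :
    Complex.exp (I * (xi j : ℂ)) ≠ Complex.exp (I * (xi k : ℂ)) := by
  intro he
  rw [Complex.exp_eq_exp_iff_exists_int] at he
  obtain ⟨t, ht⟩ := he
  have ht2 : (I : ℂ) * (xi j : ℂ) = I * ((xi k : ℂ) + (t : ℂ) * (2 * (Real.pi : ℂ))) := by
    rw [ht]; ring
  have ht3 : (xi j : ℂ) = ((xi k : ℂ) + (t:ℂ) * (2 * (Real.pi:ℂ))) :=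
    mul_left_cancel₀ Complex.I_ne_zero ht2
  have ht4 : xi j = xi k + (t : ℝ) * (2 * Real.pi) := by
    have : ((xi k + (t:ℝ) * (2 * Real.pi) : ℝ) : ℂ) = ((xi j : ℝ) : ℂ) := by
      push_cast
      rw [ht3]
    exact (Complex.ofReal_inj.1 this).symm
  have hπ := Real.pi_pos
  have hb1 : xi j - xi k < 2 * Real.pi := by
    have := hxiU j
    have := hxiL k
    linarith
  have hb2 : -(2 * Real.pi) < xi j - xi k := by
    have := hxiL j
    have := hxiU k
    linarith
  rcases lt_trichotomy t 0 with htl | rfl2 | htg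
  · have ht5 : t ≤ -1 := by omega
    have : (t : ℝ) ≤ -1 := by exact_mod_cast ht5
    nlinarith
  · rw [rfl2] at ht4
    simp at ht4
    exact hjk (hxi.injective ht4)
  · have : (1 : ℝ) ≤ (t : ℝ) := by exact_mod_cast htg
    nlinarith

end swap

section phiswap

lemma hexp3 (z1 z2 z3 : ℂ) : Complex.exp (I * (z1 + z2 + z3))
    = Complex.exp (I * z1) * Complex.exp (I * z2) * Complex.exp (I * z3) := by
  rw [← Complex.exp_add, ← Complex.exp_add]
  congr 1
  ring

lemma Phi_swap (q : ℝ) (xi : Fin n → ℝ)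
    (hdist : ∀ j k : Fin n, j ≠ k →
      Complex.exp (I * (xi j : ℂ)) ≠ Complex.exp (I * (xi k : ℂ)))
    (w : Fin n → ℤ) {a c : Fin n} (hac : (a:ℕ) + 1 = (c:ℕ)) (hw : w a + 1 = w c) :
    hallLittlewood q xi w = q * hallLittlewood q xi (w ∘ Equiv.swap a c) := by
  classical
  have hne : a ≠ c := by
    intro he; have : (a:ℕ) = (c:ℕ) := congrArg _ he; omega
  set s := Equiv.swap a c with hsdef
  have hss : ∀ x, s (s x) = x := fun x => Equiv.swap_apply_self a c x
  have hsa : s a = c := Equiv.swap_apply_left a c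
  have hsc : s c = a := Equiv.swap_apply_right a c
  have hsel : ∀ j : Fin n, j ≠ a → j ≠ c → s j = j :=
    fun j h1 h2 => Equiv.swap_apply_of_ne_of_ne h1 h2
  set F : (Fin n → ℤ) → Equiv.Perm (Fin n) → ℂ := fun v σ =>
    Cfun q (xi ∘ σ) * Complex.exp (I * ∑ j : Fin n, (v j : ℂ) * (xi (σ j) : ℂ)) with hF
  have hΦ : ∀ v : Fin n → ℤ, hallLittlewood q xi v = ∑ σ : Equiv.Perm (Fin n), F v σ :=
    fun v => rfl
  have hca : c ∈ Finset.univ.erase a := Finset.mem_erase.2 ⟨hne.symm, Finset.mem_univ c⟩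
  -- the key pointwise identity
  have Key : ∀ σ : Equiv.Perm (Fin n),
      F w σ + F w (σ * s) = q * (F (w ∘ s) σ + F (w ∘ s) (σ * s)) := by
    intro σ
    set u : ℝ := xi (σ a) with hu
    set v : ℝ := xi (σ c) with hv
    set X : ℂ := Complex.exp (I * (u:ℂ)) with hX
    set Y : ℂ := Complex.exp (I * (v:ℂ)) with hY
    have hX0 : X ≠ 0 := Complex.exp_ne_zero _
    have hY0 : Y ≠ 0 := Complex.exp_ne_zero _
    have hXY : X ≠ Y := hdist (σ a) (σ c) (fun he => hne (σ.injective he))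
    have hXYne : X - Y ≠ 0 := sub_ne_zero.2 hXY
    have hYXne : Y - X ≠ 0 := sub_ne_zero.2 (Ne.symm hXY)
    set A : ℂ := Cfun q (xi ∘ σ) with hA
    set A' : ℂ := Cfun q ((xi ∘ σ) ∘ s) with hA'
    -- Cfun swap relation
    have hCsw := Cfun_swap q (xi ∘ σ) hac
    rw [← hsdef, ← hA, ← hA'] at hCsw
    have hcu : (xi ∘ σ) a = u := rfl
    have hcv : (xi ∘ σ) c = v := rfl
    rw [hcu, hcv] at hCsw
    have heac : Complex.exp (I * ((v:ℂ) - (u:ℂ))) * X = Y := by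
      rw [hX, hY, ← Complex.exp_add]
      congr 1
      ring
    have heca : Complex.exp (I * ((u:ℂ) - (v:ℂ))) * Y = X := by
      rw [hX, hY, ← Complex.exp_add]
      congr 1
      ring
    have hDac : DD q u v = (X - q * Y) / (X - Y) := by
      rw [DD, ← mul_div_mul_left _ _ hX0]
      congr 1
      · rw [mul_sub, mul_one, show X * ((q:ℂ) * Complex.exp (I * ((v:ℂ) - (u:ℂ))))
          = (q:ℂ) * (Complex.exp (I * ((v:ℂ) - (u:ℂ))) * X) by ring, heac]
      · rw [mul_sub, mul_one, mul_comm X, heac]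
    have hDca : DD q v u = (Y - q * X) / (Y - X) := by
      rw [DD, ← mul_div_mul_left _ _ hY0]
      congr 1
      · rw [mul_sub, mul_one, show Y * ((q:ℂ) * Complex.exp (I * ((u:ℂ) - (v:ℂ))))
          = (q:ℂ) * (Complex.exp (I * ((u:ℂ) - (v:ℂ))) * Y) by ring, heca]
      · rw [mul_sub, mul_one, mul_comm Y, heca]
    rw [hDac, hDca] at hCsw
    have hAA : A' * (X - (q:ℂ) * Y) = A * ((q:ℂ) * X - Y) := by
      apply mul_right_cancel₀ hYXne
      have h1 := hCsw
      field_simp at h1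
      linear_combination h1
    have hbracket : A * Y + A' * X = (q:ℂ) * (A * X + A' * Y) := by
      linear_combination hAA
    -- sum splittings
    set R : ℂ := ∑ j ∈ (Finset.univ.erase a).erase c, (w j : ℂ) * (xi (σ j) : ℂ) with hR
    have hsplitw : ∀ v' : Fin n → ℤ, (∑ j : Fin n, (v' j : ℂ) * (xi (σ j) : ℂ))
        = (v' a : ℂ) * (u:ℂ) + (v' c : ℂ) * (v:ℂ)
          + ∑ j ∈ (Finset.univ.erase a).erase c, (v' j : ℂ) * (xi (σ j) : ℂ) := by
      intro v'
      rw [← Finset.add_sum_erase _ _ (Finset.mem_univ a), ← Finset.add_sum_erase _ _ hca]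
      ring
    have hreidx : ∀ v' : Fin n → ℤ, (∑ j : Fin n, (v' j : ℂ) * (xi ((σ * s) j) : ℂ))
        = ∑ j : Fin n, ((v' (s j) : ℂ)) * (xi (σ j) : ℂ) := by
      intro v'
      rw [← Equiv.sum_comp s (fun j => ((v' (s j) : ℂ)) * (xi (σ j) : ℂ))]
      apply Finset.sum_congr rfl
      intro j _
      rw [hss j]
      rfl
    have hrest : ∀ v' : Fin n → ℤ, (∀ j : Fin n, j ≠ a → j ≠ c → v' j = w j) →
        (∑ j ∈ (Finset.univ.erase a).erase c, (v' j : ℂ) * (xi (σ j) : ℂ)) = R := by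
      intro v' hv'
      apply Finset.sum_congr rfl
      intro j hj
      have hj1 : j ≠ c := (Finset.mem_erase.1 hj).1
      have hj2 : j ≠ a := (Finset.mem_erase.1 (Finset.mem_of_mem_erase hj)).1
      rw [hv' j hj2 hj1]
    have hS1 : (∑ j : Fin n, (w j : ℂ) * (xi (σ j) : ℂ))
        = (w a : ℂ) * (u:ℂ) + (w c : ℂ) * (v:ℂ) + R := by
      rw [hsplitw w]
    have hS2 : (∑ j : Fin n, (w j : ℂ) * (xi ((σ * s) j) : ℂ))
        = (w c : ℂ) * (u:ℂ) + (w a : ℂ) * (v:ℂ) + R := by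
      rw [hreidx w, hsplitw (fun j => w (s j)), hsa, hsc,
        hrest (fun j => w (s j)) (fun j h1 h2 => by show w (s j) = w j; rw [hsel j h1 h2])]
    have hS3 : (∑ j : Fin n, ((w ∘ s) j : ℂ) * (xi (σ j) : ℂ))
        = (w c : ℂ) * (u:ℂ) + (w a : ℂ) * (v:ℂ) + R := by
      rw [hsplitw (w ∘ s)]
      have e1 : (w ∘ s) a = w c := by simp only [Function.comp_apply, hsa]
      have e2 : (w ∘ s) c = w a := by simp only [Function.comp_apply, hsc]
      rw [e1, e2, hrest (w ∘ s) (fun j h1 h2 => by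
        simp only [Function.comp_apply, hsel j h1 h2])]
    have hS4 : (∑ j : Fin n, ((w ∘ s) j : ℂ) * (xi ((σ * s) j) : ℂ))
        = (w a : ℂ) * (u:ℂ) + (w c : ℂ) * (v:ℂ) + R := by
      rw [hreidx (w ∘ s), hsplitw (fun j => (w ∘ s) (s j)),
        hrest (fun j => (w ∘ s) (s j)) (fun j h1 h2 => by
          show (w ∘ s) (s j) = w j
          simp only [Function.comp_apply, hsel j h1 h2, hss])]
      simp only [Function.comp_apply, hss]
    -- cast fact
    have hcast : ((w c : ℤ) : ℂ) = ((w a : ℤ) : ℂ) + 1 := by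
      rw [← hw]; push_cast; ring
    have hCA' : Cfun q (xi ∘ ⇑(σ * s)) = A' := rfl
    simp only [hF]
    rw [hS1, hS2, hS3, hS4]
    simp only [hexp3]
    rw [hCA', ← hA, hcast]
    set P : ℂ := Complex.exp (I * ((w a : ℂ) * (u:ℂ))) with hP
    set Q : ℂ := Complex.exp (I * ((w a : ℂ) * (v:ℂ))) with hQ
    set W : ℂ := Complex.exp (I * R) with hW
    have hPX : Complex.exp (I * (((w a : ℂ) + 1) * (u:ℂ))) = P * X := by
      rw [hP, hX, ← Complex.exp_add]
      congr 1
      ring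
    have hQY : Complex.exp (I * (((w a : ℂ) + 1) * (v:ℂ))) = Q * Y := by
      rw [hQ, hY, ← Complex.exp_add]
      congr 1
      ring
    rw [hPX, hQY]
    linear_combination (P * Q * W) * hbracket
  -- summing up
  have hre : ∀ v' : Fin n → ℤ,
      (∑ σ : Equiv.Perm (Fin n), F v' (σ * s)) = ∑ σ : Equiv.Perm (Fin n), F v' σ := by
    intro v'
    exact Equiv.sum_comp (Equiv.mulRight s) (F v')
  have h2 : hallLittlewood q xi w + hallLittlewood q xi w
      = q * hallLittlewood q xi (w ∘ s) + q * hallLittlewood q xi (w ∘ s) := by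
    rw [hΦ, hΦ]
    calc (∑ σ : Equiv.Perm (Fin n), F w σ) + ∑ σ : Equiv.Perm (Fin n), F w σ
        = (∑ σ : Equiv.Perm (Fin n), F w σ) + ∑ σ : Equiv.Perm (Fin n), F w (σ * s) := by
          rw [hre w]
      _ = ∑ σ : Equiv.Perm (Fin n), (F w σ + F w (σ * s)) := by
          rw [Finset.sum_add_distrib]
      _ = ∑ σ : Equiv.Perm (Fin n), (q:ℂ) * (F (w ∘ s) σ + F (w ∘ s) (σ * s)) :=
          Finset.sum_congr rfl (fun σ _ => Key σ)
      _ = (q:ℂ) * ∑ σ : Equiv.Perm (Fin n), (F (w ∘ s) σ + F (w ∘ s) (σ * s)) := by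
          rw [Finset.mul_sum]
      _ = (q:ℂ) * ((∑ σ : Equiv.Perm (Fin n), F (w ∘ s) σ)
            + ∑ σ : Equiv.Perm (Fin n), F (w ∘ s) (σ * s)) := by
          rw [Finset.sum_add_distrib]
      _ = (q:ℂ) * ((∑ σ : Equiv.Perm (Fin n), F (w ∘ s) σ)
            + ∑ σ : Equiv.Perm (Fin n), F (w ∘ s) σ) := by rw [hre (w ∘ s)]
      _ = q * (∑ σ : Equiv.Perm (Fin n), F (w ∘ s) σ)
            + q * ∑ σ : Equiv.Perm (Fin n), F (w ∘ s) σ := by ring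
  linear_combination h2 / 2

end phiswap

section norm

variable (lam : Fin n → ℤ)

lemma upClosed_of_dd_zero {K : Finset (Fin n)} (h : dd lam K = 0) : upClosed lam K := by
  intro i hi k hik hki
  rcases eq_or_lt_of_le hik with rfl | hlt
  · exact hi
  · by_contra hk
    have hmem : ((i,k) : Fin n × Fin n) ∈
        ((Finset.univ ×ˢ Finset.univ : Finset (Fin n × Fin n)).filter
          (fun p => p.1 ∈ K ∧ p.2 ∉ K ∧ p.1 < p.2 ∧ lam p.1 = lam p.2)) := by
      simp only [Finset.mem_filter, Finset.mem_product, Finset.mem_univ, true_and]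
      exact ⟨hi, hk, hlt, hki.symm⟩
    rw [dd, Finset.card_eq_zero] at h
    rw [h] at hmem
    exact absurd hmem (Finset.notMem_empty _)

lemma exists_adj_bad (hlam : Antitone lam) {K : Finset (Fin n)} (h : 0 < dd lam K) :
    ∃ a c : Fin n, (a:ℕ) + 1 = (c:ℕ) ∧ a ∈ K ∧ c ∉ K ∧ lam a = lam c := by
  rw [dd, Finset.card_pos] at h
  obtain ⟨p, hp⟩ := h
  simp only [Finset.mem_filter, Finset.mem_product, Finset.mem_univ, true_and] at hp
  obtain ⟨hp1, hp2, hp3, hp4⟩ := hp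
  set T := K.filter (fun x => p.1 ≤ x ∧ x < p.2) with hT
  have hTne : T.Nonempty := ⟨p.1, by simp [hT, hp1, hp3]⟩
  set a := T.max' hTne with ha
  have haT : a ∈ T := T.max'_mem hTne
  have haK : a ∈ K := (Finset.mem_filter.1 haT).1
  have h1 : p.1 ≤ a := (Finset.mem_filter.1 haT).2.1
  have h2 : a < p.2 := (Finset.mem_filter.1 haT).2.2
  have h2' : (a:ℕ) < (p.2:ℕ) := h2
  have hcn : (a:ℕ) + 1 < n := by
    have := p.2.isLt
    omega
  set c : Fin n := ⟨(a:ℕ)+1, hcn⟩ with hc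
  have hacv : (a:ℕ) + 1 = (c:ℕ) := rfl
  have hacF : a < c := by rw [Fin.lt_def]; omega
  have hcle : c ≤ p.2 := by rw [Fin.le_def]; simp only [hc]; omega
  have e1 : lam a = lam p.1 := by
    have l1 : lam a ≤ lam p.1 := hlam h1
    have l2 : lam p.2 ≤ lam a := hlam h2.le
    omega
  have e2 : lam c = lam p.1 := by
    have l1 : lam c ≤ lam p.1 := hlam (le_trans h1 hacF.le)
    have l2 : lam p.2 ≤ lam c := hlam hcle
    omega
  have hcK : c ∉ K := by
    intro hcmem
    rcases eq_or_lt_of_le hcle with he | hlt2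
    · exact hp2 (he ▸ hcmem)
    · have hcT : c ∈ T := by
        simp only [hT, Finset.mem_filter]
        exact ⟨hcmem, le_trans h1 hacF.le, hlt2⟩
      exact absurd hacF (not_lt.2 (T.le_max' c hcT))
  exact ⟨a, c, hacv, haK, hcK, e1.trans e2.symm⟩

lemma mu_swap {K : Finset (Fin n)} {a c : Fin n} (hne : a ≠ c)
    (haK : a ∈ K) (hcK : c ∉ K) (hl : lam a = lam c) :
    (mu lam K) ∘ (Equiv.swap a c) = mu lam (insert c (K.erase a)) := by
  funext j
  simp only [Function.comp_apply]
  rcases eq_or_ne j a with h | hja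
  · rw [h, Equiv.swap_apply_left]
    have hnK' : a ∉ insert c (K.erase a) := by
      simp only [Finset.mem_insert, Finset.mem_erase]
      rintro (he | ⟨he, _⟩) <;> simp_all
    simp only [mu, if_neg hcK, if_neg hnK', hl]
  · rcases eq_or_ne j c with h | hjc
    · rw [h, Equiv.swap_apply_right]
      have hK' : c ∈ insert c (K.erase a) := Finset.mem_insert_self c _
      simp only [mu, haK, hK', if_pos, hl]
    · rw [Equiv.swap_apply_of_ne_of_ne hja hjc]
      have : j ∈ insert c (K.erase a) ↔ j ∈ K := by
        simp only [Finset.mem_insert, Finset.mem_erase]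
        constructor
        · rintro (he | ⟨_, hK⟩)
          · exact absurd he hjc
          · exact hK
        · intro hK; exact Or.inr ⟨hja, hK⟩
      simp only [mu, this]

lemma cnt_swap {K : Finset (Fin n)} {a c : Fin n}
    (haK : a ∈ K) (hcK : c ∉ K) (hl : lam a = lam c) (i : Fin n) :
    cnt lam (insert c (K.erase a)) i = cnt lam K i := by
  have h1 := cnt_insert lam (show c ∉ K.erase a from fun h => hcK (Finset.mem_of_mem_erase h)) i
  have h2 := cnt_erase lam haK i
  rw [hl] at h2
  by_cases hli : lam c = lam i
  · rw [if_pos hli] at h1 h2; omega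
  · rw [if_neg hli] at h1 h2; omega

lemma dd_swap {K : Finset (Fin n)} {a c : Fin n} (hac : (a:ℕ) + 1 = (c:ℕ))
    (haK : a ∈ K) (hcK : c ∉ K) (hl : lam a = lam c) :
    dd lam K = dd lam (insert c (K.erase a)) + 1 := by
  classical
  have hacF : a < c := by rw [Fin.lt_def]; omega
  have hne : a ≠ c := ne_of_lt hacF
  set s := Equiv.swap a c with hsdef
  have hss : ∀ x, s (s x) = x := fun x => Equiv.swap_apply_self a c x
  have hsa : s a = c := Equiv.swap_apply_left a c
  have hsc : s c = a := Equiv.swap_apply_right a c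
  set K' := insert c (K.erase a) with hK'
  have haK' : a ∉ K' := by
    simp only [hK', Finset.mem_insert, Finset.mem_erase]
    rintro (he | ⟨he, _⟩) <;> simp_all
  have hcK' : c ∈ K' := Finset.mem_insert_self c _
  have hKmem : ∀ j, s j ∈ K' ↔ j ∈ K := by
    intro j
    rcases eq_or_ne j a with h | hja
    · rw [h, hsa]; exact iff_of_true hcK' haK
    · rcases eq_or_ne j c with h | hjc
      · rw [h, hsc]; exact iff_of_false haK' hcK
      · rw [Equiv.swap_apply_of_ne_of_ne hja hjc]
        simp only [hK', Finset.mem_insert, Finset.mem_erase]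
        constructor
        · rintro (he | ⟨_, hmem⟩)
          · exact absurd he hjc
          · exact hmem
        · intro hmem; exact Or.inr ⟨hja, hmem⟩
  have hlamswap : ∀ j, lam (s j) = lam j := lam_swap lam hl
  set SS : Finset (Fin n) → Finset (Fin n × Fin n) := fun X =>
    ((Finset.univ ×ˢ Finset.univ : Finset (Fin n × Fin n)).filter
      (fun p => p.1 ∈ X ∧ p.2 ∉ X ∧ p.1 < p.2 ∧ lam p.1 = lam p.2)) with hSS
  have hmemSS : ∀ X (p : Fin n × Fin n), p ∈ SS X ↔
      (p.1 ∈ X ∧ p.2 ∉ X ∧ p.1 < p.2 ∧ lam p.1 = lam p.2) := by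
    intro X p
    simp only [hSS, Finset.mem_filter, Finset.mem_product, Finset.mem_univ, true_and]
  have hacSS : ((a,c) : Fin n × Fin n) ∈ SS K := by
    rw [hmemSS]
    exact ⟨haK, hcK, hacF, hl⟩
  have hcard : ((SS K).erase (a,c)).card = (SS K').card := by
    apply Finset.card_bij' (fun p _ => ((s p.1, s p.2) : Fin n × Fin n))
      (fun p _ => ((s p.1, s p.2) : Fin n × Fin n))
    · -- maps into SS K'
      intro p hp
      have hp2 := (Finset.mem_erase.1 hp).2
      have hpne := (Finset.mem_erase.1 hp).1
      rw [hmemSS] at hp2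
      obtain ⟨q1, q2, q3, q4⟩ := hp2
      rw [hmemSS]
      refine ⟨(hKmem p.1).2 q1, fun hc2 => q2 ((hKmem p.2).1 hc2), ?_, by
        rw [hlamswap, hlamswap]; exact q4⟩
      rw [hsdef]
      apply (swap_lt_iff hac p.1 p.2 ?_ ?_).2 q3
      · rintro ⟨e1, e2⟩
        exact hpne (by rw [← e1, ← e2])
      · rintro ⟨e1, e2⟩
        exact hcK (e1 ▸ q1)
    · -- maps back
      intro p hp
      rw [hmemSS] at hp
      obtain ⟨q1, q2, q3, q4⟩ := hp
      have hp1a : p.1 ≠ a := fun he => haK' (he ▸ q1)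
      have hne2 : ¬(p.1 = c ∧ p.2 = a) := by
        rintro ⟨e1, e2⟩
        rw [e1, e2] at q3
        exact absurd hacF (not_lt.2 q3.le)
      refine Finset.mem_erase.2 ⟨?_, ?_⟩
      · intro he
        have e1 : s p.1 = a := (Prod.ext_iff.1 he).1
        have e2 : s p.2 = c := (Prod.ext_iff.1 he).2
        have e1' : p.1 = s a := by rw [← e1, hss]
        rw [hsa] at e1'
        exact hp1a (by
          exfalso
          have e2' : p.2 = s c := by rw [← e2, hss]
          rw [hsc] at e2'
          exact hne2 ⟨e1', e2'⟩)
      · rw [hmemSS]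
        have m1 : s p.1 ∈ K := by
          have := (hKmem (s p.1)).1
          rw [hss] at this
          exact this q1
        have m2 : s p.2 ∉ K := by
          intro hmem
          have := (hKmem (s p.2)).2 hmem
          rw [hss] at this
          exact q2 this
        refine ⟨m1, m2, ?_, by rw [hlamswap, hlamswap]; exact q4⟩
        rw [hsdef]
        apply (swap_lt_iff hac p.1 p.2 ?_ ?_).2 q3
        · rintro ⟨e1, e2⟩
          exact haK' (e1 ▸ q1)
        · exact hne2
    · intro p _
      exact Prod.ext_iff.2 ⟨hss p.1, hss p.2⟩
    · intro p _
      exact Prod.ext_iff.2 ⟨hss p.1, hss p.2⟩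
  have h1 : (SS K).card = ((SS K).erase (a,c)).card + 1 := by
    rw [Finset.card_erase_of_mem hacSS]
    have : 0 < (SS K).card := Finset.card_pos.2 ⟨(a,c), hacSS⟩
    omega
  have hdd1 : dd lam K = (SS K).card := rfl
  have hdd2 : dd lam K' = (SS K').card := rfl
  rw [hdd1, hdd2, h1, hcard]

lemma Phi_norm (q : ℝ) (xi : Fin n → ℝ)
    (hdist : ∀ j k : Fin n, j ≠ k →
      Complex.exp (I * (xi j : ℂ)) ≠ Complex.exp (I * (xi k : ℂ)))
    (hlam : Antitone lam) :
    ∀ (N : ℕ) (K : Finset (Fin n)), dd lam K = N →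
      hallLittlewood q xi (mu lam K)
        = ((q:ℝ):ℂ) ^ (dd lam K) * hallLittlewood q xi (mu lam (NN lam K)) := by
  intro N
  induction N using Nat.strong_induction_on with
  | _ N IHN =>
  intro K hK
  rcases Nat.eq_zero_or_pos N with rfl | hpos
  · rw [hK, pow_zero, one_mul, NN_eq_of_upClosed lam (upClosed_of_dd_zero lam hK)]
  · obtain ⟨a, c, hac, haK, hcK, hl⟩ := exists_adj_bad lam hlam (by omega : 0 < dd lam K)
    have hne : a ≠ c := by
      intro he; have : (a:ℕ) = (c:ℕ) := congrArg _ he; omega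
    set K' := insert c (K.erase a) with hK'
    have h1 : dd lam K = dd lam K' + 1 := dd_swap lam hac haK hcK hl
    have hmuac : (mu lam K) a + 1 = (mu lam K) c := by
      simp only [mu, if_pos haK, if_neg hcK, hl]
      ring
    have h2 := Phi_swap q xi hdist (mu lam K) hac hmuac
    rw [mu_swap lam hne haK hcK hl] at h2
    have h4 := IHN (dd lam K') (by omega) K' rfl
    have h5 : NN lam K' = NN lam K := NN_cnt_congr lam (fun i => cnt_swap lam haK hcK hl i)
    rw [h2, h4, h5, h1, pow_succ]
    ring

end norm

section expandsec

lemma expand (q : ℝ) (xi : Fin n → ℝ) (lam : Fin n → ℤ) (r : ℕ) :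
    (∑ J : Finset (Fin n), if J.card = r then ∏ j ∈ J, Complex.exp (-I * (xi j : ℂ)) else 0)
        * hallLittlewood q xi lam
      = ∑ K : Finset (Fin n), if K.card = r then hallLittlewood q xi (mu lam K) else 0 := by
  classical
  have hS : ∀ σ : Equiv.Perm (Fin n),
      (∑ J : Finset (Fin n), if J.card = r then ∏ j ∈ J, Complex.exp (-I * (xi j : ℂ)) else 0)
      = ∑ K : Finset (Fin n),
          if K.card = r then ∏ k ∈ K, Complex.exp (-I * (xi (σ k) : ℂ)) else 0 := by
    intro σ
    rw [← Equiv.sum_comp (Equiv.finsetCongr (σ : Fin n ≃ Fin n))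
      (fun J => if J.card = r then ∏ j ∈ J, Complex.exp (-I * (xi j : ℂ)) else 0)]
    apply Finset.sum_congr rfl
    intro K _
    rw [Equiv.finsetCongr_apply, Finset.card_map, Finset.prod_map]
    rfl
  have hmucast : ∀ (K : Finset (Fin n)) (j : Fin n),
      ((mu lam K j : ℤ) : ℂ) = ((lam j : ℤ) : ℂ) - (if j ∈ K then (1:ℂ) else 0) := by
    intro K j
    simp only [mu]
    split_ifs <;> push_cast <;> ring
  have hterm : ∀ (σ : Equiv.Perm (Fin n)) (K : Finset (Fin n)),
      (∏ k ∈ K, Complex.exp (-I * (xi (σ k) : ℂ)))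
        * (Cfun q (xi ∘ σ) * Complex.exp (I * ∑ j : Fin n, (lam j : ℂ) * (xi (σ j) : ℂ)))
      = Cfun q (xi ∘ σ)
          * Complex.exp (I * ∑ j : Fin n, ((mu lam K j : ℤ) : ℂ) * (xi (σ j) : ℂ)) := by
    intro σ K
    rw [← Complex.exp_sum, mul_comm, mul_assoc, ← Complex.exp_add]
    congr 2
    have hKsum : (∑ k ∈ K, (-I * (xi (σ k) : ℂ)))
        = ∑ j : Fin n, (if j ∈ K then (-I * (xi (σ j) : ℂ)) else 0) := by
      rw [Finset.sum_ite_mem, Finset.univ_inter]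
    rw [hKsum]
    have hmu : (∑ j : Fin n, ((mu lam K j : ℤ) : ℂ) * (xi (σ j) : ℂ))
        = (∑ j : Fin n, ((lam j : ℤ) : ℂ) * (xi (σ j) : ℂ))
          - ∑ j : Fin n, (if j ∈ K then ((xi (σ j) : ℂ)) else 0) := by
      rw [← Finset.sum_sub_distrib]
      apply Finset.sum_congr rfl
      intro j _
      rw [hmucast K j]
      split_ifs <;> ring
    rw [hmu, mul_sub, Finset.mul_sum]
    have : ∀ j : Fin n, (if j ∈ K then (-I * (xi (σ j) : ℂ)) else 0)
        = -(I * (if j ∈ K then ((xi (σ j) : ℂ)) else 0)) := by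
      intro j
      split_ifs <;> ring
    rw [Finset.sum_congr rfl (fun j _ => this j), Finset.sum_neg_distrib,
      ← Finset.mul_sum, ← Finset.mul_sum]
    ring
  show (∑ J : Finset (Fin n), if J.card = r then ∏ j ∈ J, Complex.exp (-I * (xi j : ℂ)) else 0)
      * (∑ σ : Equiv.Perm (Fin n),
          Cfun q (xi ∘ σ) * Complex.exp (I * ∑ j : Fin n, (lam j : ℂ) * (xi (σ j) : ℂ)))
    = _
  rw [Finset.mul_sum]
  rw [Finset.sum_congr rfl (fun σ _ => by rw [hS σ, Finset.sum_mul])]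
  rw [Finset.sum_comm]
  apply Finset.sum_congr rfl
  intro K _
  by_cases hKr : K.card = r
  · rw [if_pos hKr]
    show _ = ∑ σ : Equiv.Perm (Fin n),
        Cfun q (xi ∘ σ) * Complex.exp (I * ∑ j : Fin n, ((mu lam K j : ℤ) : ℂ) * (xi (σ j) : ℂ))
    apply Finset.sum_congr rfl
    intro σ _
    rw [if_pos hKr, hterm σ K]
  · rw [if_neg hKr]
    apply Finset.sum_eq_zero
    intro σ _
    rw [if_neg hKr]
    exact zero_mul _

lemma VU_univ_eq (q : ℝ) (lam : Fin n → ℤ) (J : Finset (Fin n)) :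
    VU q lam Finset.univ J = Vcoef q lam Jᶜ := by
  rw [VU_def, Vcoef]
  apply Finset.prod_congr rfl
  intro j _
  apply Finset.prod_congr rfl
  intro k _
  refine if_congr ?_ rfl rfl
  simp only [Finset.mem_univ, true_and, Finset.mem_compl, not_not]
  try tauto

end expandsec

end DP

theorem hallLittlewood_dual_pieri (q : ℝ) (hq : 0 < q) (hq1 : q < 1) (n r : ℕ)
    (hr : 1 ≤ r) (hrn : r ≤ n)
    (xi : Fin n → ℝ) (hxi : StrictAnti xi)
    (hxiU : ∀ j, xi j < Real.pi) (hxiL : ∀ j, -Real.pi < xi j)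
    (lam : Fin n → ℤ) (hlam : Antitone lam) :
    (∑ J : Finset (Fin n), if J.card = r then ∏ j ∈ J, exp (-I * (xi j : ℂ)) else 0)
        * hallLittlewood q xi lam
      = ∑ J : Finset (Fin n),
          if J.card = r ∧ Antitone (fun k => lam k - if k ∈ J then 1 else 0) then
            ((Vcoef q lam Jᶜ : ℝ) : ℂ)
              * hallLittlewood q xi (fun k => lam k - if k ∈ J then 1 else 0)
          else 0 := by
  classical
  have hdist : ∀ j k : Fin n, j ≠ k →
      Complex.exp (I * (xi j : ℂ)) ≠ Complex.exp (I * (xi k : ℂ)) :=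
    fun j k hjk => DP.exp_ne_of_ne hxi hxiU hxiL hjk
  rw [DP.expand q xi lam r]
  have key : ∀ J : Finset (Fin n),
      (∑ K ∈ Finset.univ.filter (fun K => DP.NN lam K = J),
        if K.card = r then hallLittlewood q xi (DP.mu lam K) else 0)
      = (if J.card = r ∧ Antitone (DP.mu lam J)
          then ((Vcoef q lam Jᶜ : ℝ) : ℂ) * hallLittlewood q xi (DP.mu lam J) else 0) := by
    intro J
    have h1 : ∀ K ∈ Finset.univ.filter (fun K => DP.NN lam K = J),
        (if K.card = r then hallLittlewood q xi (DP.mu lam K) else 0)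
        = (if K.card = r then ((q:ℝ):ℂ) ^ DP.dd lam K else 0)
            * hallLittlewood q xi (DP.mu lam J) := by
      intro K hK
      have hNK : DP.NN lam K = J := (Finset.mem_filter.1 hK).2
      by_cases h : K.card = r
      · rw [if_pos h, if_pos h, DP.Phi_norm lam q xi hdist hlam (DP.dd lam K) K rfl, hNK]
      · rw [if_neg h, if_neg h, zero_mul]
    rw [Finset.sum_congr rfl h1, ← Finset.sum_mul]
    by_cases hP : J.card = r ∧ Antitone (DP.mu lam J)
    · rw [if_pos hP]
      have hJup : DP.upClosed lam J := DP.upClosed_of_antitone_mu lam hP.2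
      have hpt : ∀ K : Finset (Fin n),
          (DP.NN lam K = J ∧ K.card = r) ↔ (∀ i, DP.cnt lam K i = DP.cnt lam J i) := by
        intro K
        constructor
        · rintro ⟨hNK, _⟩
          intro i
          rw [← hNK]
          exact (DP.cnt_NN lam K i).symm
        · intro h
          refine ⟨?_, ?_⟩
          · rw [DP.NN_cnt_congr lam h]
            exact DP.NN_eq_of_upClosed lam hJup
          · rw [DP.card_eq_of_cntMatch lam h, hP.1]
      have hcoef : (∑ K ∈ Finset.univ.filter (fun K => DP.NN lam K = J),
          if K.card = r then ((q:ℝ):ℂ) ^ DP.dd lam K else 0)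
          = ((Vcoef q lam Jᶜ : ℝ) : ℂ) := by
        have hSR := DP.S_main hq hq1 lam hlam (Finset.univ.card) Finset.univ J rfl
          (Finset.subset_univ J) (fun i _ k _ _ => Finset.mem_univ k) hJup
        calc (∑ K ∈ Finset.univ.filter (fun K => DP.NN lam K = J),
              if K.card = r then ((q:ℝ):ℂ) ^ DP.dd lam K else 0)
            = ∑ K : Finset (Fin n),
                if (∀ i, DP.cnt lam K i = DP.cnt lam J i) then ((q:ℝ):ℂ) ^ DP.dd lam K
                else 0 := by
              rw [Finset.sum_filter]
              apply Finset.sum_congr rfl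
              intro K _
              by_cases hc1 : DP.NN lam K = J
              · rw [if_pos hc1]
                by_cases hc2 : K.card = r
                · rw [if_pos hc2, if_pos ((hpt K).1 ⟨hc1, hc2⟩)]
                · rw [if_neg hc2, if_neg (fun hc => hc2 (((hpt K).2 hc).2))]
              · rw [if_neg hc1, if_neg (fun hc => hc1 (((hpt K).2 hc).1))]
          _ = (((∑ K ∈ (Finset.univ : Finset (Fin n)).powerset,
                if (∀ i, DP.cnt lam K i = DP.cnt lam J i) then (q:ℝ) ^ DP.dd lam K else 0) : ℝ)
                : ℂ) := by
              rw [Finset.powerset_univ]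
              push_cast
              apply Finset.sum_congr rfl
              intro K _
              split_ifs <;> push_cast <;> ring
          _ = ((DP.VU q lam Finset.univ J : ℝ) : ℂ) := by rw [hSR]
          _ = ((Vcoef q lam Jᶜ : ℝ) : ℂ) := by rw [DP.VU_univ_eq]
      rw [hcoef, mul_comm]
    · rw [if_neg hP]
      have hz : (∑ K ∈ Finset.univ.filter (fun K => DP.NN lam K = J),
          if K.card = r then ((q:ℝ):ℂ) ^ DP.dd lam K else 0) = 0 := by
        apply Finset.sum_eq_zero
        intro K hK
        have hNK : DP.NN lam K = J := (Finset.mem_filter.1 hK).2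
        rw [if_neg]
        intro hc
        apply hP
        constructor
        · rw [← hNK, DP.card_eq_of_cntMatch lam (fun i => DP.cnt_NN lam K i), hc]
        · rw [← hNK]
          exact DP.antitone_mu_NN lam hlam K
      rw [hz, zero_mul]
  calc (∑ K : Finset (Fin n), if K.card = r then hallLittlewood q xi (DP.mu lam K) else 0)
      = ∑ J : Finset (Fin n), ∑ K ∈ Finset.univ.filter (fun K => DP.NN lam K = J),
          (if K.card = r then hallLittlewood q xi (DP.mu lam K) else 0) := by
        rw [Finset.sum_fiberwise_eq_sum_filter]
        rw [Finset.filter_true_of_mem (fun _ _ => Finset.mem_univ _)]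
    _ = ∑ J : Finset (Fin n), (if J.card = r ∧ Antitone (DP.mu lam J)
          then ((Vcoef q lam Jᶜ : ℝ) : ℂ) * hallLittlewood q xi (DP.mu lam J) else 0) :=
        Finset.sum_congr rfl (fun J _ => key J)
    _ = _ := by
        apply Finset.sum_congr rfl
        intro J _
        rfl
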